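/- Let H be a hyperbolic group with finite generating set A and word metric d_A, let K ≥ 0 be such that every triple of points of H admits a K-center, and let φ : H → H be an endomorphism. Then the BRP holds for φ (for every p ≥ 0 there exists q ≥ 0 such that for all u, v ∈ H, (u|v) ≤ p implies (φ(u)|φ(v)) ≤ q) if and only if φ is coarse-median preserving, i.e., there exists C ≥ 0 such that for all x, y, z ∈ H, every K-center m of (x, y, z) and every K-center m′ of (φ(x), φ(y), φ(z)) satisfy d_A(φ(m), m′) ≤ C. -/

import Mathlib

namespace Paper

variable {H : Type*} [Group H]

/-- `g` can be written as a product of `n` elements of `A ∪ A⁻¹`. -/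
def WordWitness (A : Set H) (g : H) (n : ℕ) : Prop :=
  ∃ l : List H, l.length = n ∧ (∀ x ∈ l, x ∈ A ∨ x⁻¹ ∈ A) ∧ l.prod = g

/-- The word metric on `H` with respect to the generating set `A`. -/
noncomputable def wd (A : Set H) (g h : H) : ℕ :=
  sInf {n | WordWitness A (g⁻¹ * h) n}

/-- The Gromov product `(u|v)_w` with respect to the word metric for `A`. -/
noncomputable def gp (A : Set H) (w u v : H) : ℝ :=
  ((wd A w u : ℝ) + (wd A w v : ℝ) - (wd A u v : ℝ)) / 2

/-- A discrete geodesic `γ : {0,…,n} → H` from `x` to `y` for the word metric of `A`. -/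
def IsDiscreteGeodesic (A : Set H) (n : ℕ) (γ : ℕ → H) (x y : H) : Prop :=
  γ 0 = x ∧ γ n = y ∧
    ∀ i, i ≤ n → ∀ j, j ≤ n → (wd A (γ i) (γ j) : ℤ) = |(i : ℤ) - (j : ℤ)|

/-- `H` is hyperbolic with respect to `A`: some `δ ≥ 0` satisfies the Rips thin-triangles
condition for discrete geodesics (all three sides are covered since `x, y, z` and the three
geodesics are universally quantified, and hence may be cyclically permuted). -/
def IsHyperbolic (A : Set H) : Prop :=
  ∃ δ : ℝ, 0 ≤ δ ∧ ∀ x y z : H, ∀ n₁ n₂ n₃ : ℕ, ∀ α β γ : ℕ → H,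
    IsDiscreteGeodesic A n₁ α x y → IsDiscreteGeodesic A n₂ β y z →
    IsDiscreteGeodesic A n₃ γ z x → ∀ i, i ≤ n₁ →
      ∃ j, (j ≤ n₂ ∧ (wd A (α i) (β j) : ℝ) ≤ δ) ∨
           (j ≤ n₃ ∧ (wd A (α i) (γ j) : ℝ) ≤ δ)

/-- The bounded reduction property for `φ`, in its Gromov-product formulation:
for every `p ≥ 0` there is `q ≥ 0` such that `(u|v) ≤ p` implies `(φ(u)|φ(v)) ≤ q`. -/
def BRP (A : Set H) (φ : H →* H) : Prop :=
  ∀ p : ℝ, 0 ≤ p → ∃ q : ℝ, 0 ≤ q ∧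
    ∀ u v : H, gp A 1 u v ≤ p → gp A 1 (φ u) (φ v) ≤ q

/-- `m` is a `K`-center of the triple `(x,y,z)`: it lies within distance `K` of (the image of)
every discrete geodesic joining any two of the three points. -/
def IsKCenter (A : Set H) (K : ℝ) (x y z m : H) : Prop :=
  (∀ n : ℕ, ∀ γ : ℕ → H, IsDiscreteGeodesic A n γ x y →
    ∃ i, i ≤ n ∧ (wd A m (γ i) : ℝ) ≤ K) ∧
  (∀ n : ℕ, ∀ γ : ℕ → H, IsDiscreteGeodesic A n γ y z →
    ∃ i, i ≤ n ∧ (wd A m (γ i) : ℝ) ≤ K) ∧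
  (∀ n : ℕ, ∀ γ : ℕ → H, IsDiscreteGeodesic A n γ z x →
    ∃ i, i ≤ n ∧ (wd A m (γ i) : ℝ) ≤ K)

section Basic

variable {A : Set H}

lemma exists_witness (hgen : Subgroup.closure A = ⊤) (g : H) :
    ∃ n, WordWitness A g n := by
  have hg : g ∈ Subgroup.closure A := by rw [hgen]; trivial
  induction hg using Subgroup.closure_induction with
  | mem x hx => exact ⟨1, [x], rfl, by rintro y hy; simp at hy; subst hy; exact Or.inl hx, by simp⟩
  | one => exact ⟨0, [], rfl, by simp, by simp⟩
  | mul x y hx hy ihx ihy =>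
      obtain ⟨n, l, hl, hmem, hprod⟩ := ihx
      obtain ⟨m, l', hl', hmem', hprod'⟩ := ihy
      exact ⟨n + m, l ++ l', by simp [hl, hl'], by
        intro a ha; rcases List.mem_append.1 ha with h | h
        · exact hmem a h
        · exact hmem' a h, by simp [hprod, hprod']⟩
  | inv x hx ihx =>
      obtain ⟨n, l, hl, hmem, hprod⟩ := ihx
      refine ⟨n, (l.map (fun a => a⁻¹)).reverse, by simp [hl], ?_, ?_⟩
      · intro a ha
        simp only [List.mem_reverse, List.mem_map] at ha
        obtain ⟨b, hb, rfl⟩ := ha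
        rcases hmem b hb with h | h
        · exact Or.inr (by simpa using h)
        · exact Or.inl h
      · rw [← List.prod_inv_reverse, hprod]

lemma wd_le {g h : H} {n : ℕ} (hw : WordWitness A (g⁻¹ * h) n) : wd A g h ≤ n :=
  Nat.sInf_le hw

lemma wd_spec (hgen : Subgroup.closure A = ⊤) (g h : H) :
    WordWitness A (g⁻¹ * h) (wd A g h) :=
  Nat.sInf_mem (exists_witness hgen (g⁻¹ * h))

lemma wd_self (g : H) : wd A g g = 0 :=
  Nat.le_zero.1 (wd_le ⟨[], rfl, by simp, by simp⟩)

lemma wordWitness_symm {g : H} {n : ℕ} (hw : WordWitness A g n) : WordWitness A g⁻¹ n := by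
  obtain ⟨l, hl, hmem, hprod⟩ := hw
  refine ⟨(l.map (fun a => a⁻¹)).reverse, by simp [hl], ?_, ?_⟩
  · intro a ha
    simp only [List.mem_reverse, List.mem_map] at ha
    obtain ⟨b, hb, rfl⟩ := ha
    rcases hmem b hb with h | h
    · exact Or.inr (by simpa using h)
    · exact Or.inl h
  · rw [← List.prod_inv_reverse, hprod]

lemma wd_symm (g h : H) : wd A g h = wd A h g := by
  unfold wd
  congr 1
  ext n
  constructor
  · intro hw
    have := wordWitness_symm (A := A) hw
    simpa [mul_inv_rev] using this
  · intro hw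
    have := wordWitness_symm (A := A) hw
    simpa [mul_inv_rev] using this

lemma wd_triangle (hgen : Subgroup.closure A = ⊤) (g h k : H) :
    wd A g k ≤ wd A g h + wd A h k := by
  obtain ⟨l1, hl1, hm1, hp1⟩ := wd_spec hgen g h
  obtain ⟨l2, hl2, hm2, hp2⟩ := wd_spec hgen h k
  refine wd_le ⟨l1 ++ l2, by simp [hl1, hl2], ?_, by simp [hp1, hp2, mul_assoc]⟩
  intro a ha
  rcases List.mem_append.1 ha with h | h
  · exact hm1 a h
  · exact hm2 a h

lemma wd_left (g h₁ h₂ : H) : wd A (g * h₁) (g * h₂) = wd A h₁ h₂ := by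
  unfold wd
  congr 2
  group

lemma wd_one (g h : H) : wd A g h = wd A 1 (g⁻¹ * h) := by
  have := wd_left (A := A) g 1 (g⁻¹ * h)
  simp only [mul_one] at this
  rw [← this]
  congr 1
  group

lemma gp_nonneg (hgen : Subgroup.closure A = ⊤) (w u v : H) : 0 ≤ gp A w u v := by
  have h1 := wd_triangle hgen u w v
  have h2 := wd_symm (A := A) u w
  unfold gp
  have : (wd A u v : ℝ) ≤ (wd A w u : ℝ) + (wd A w v : ℝ) := by
    rw [← h2]; exact_mod_cast h1
  linarith

lemma gp_symm (w u v : H) : gp A w u v = gp A w v u := by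
  unfold gp
  rw [wd_symm (A := A) u v]
  ring

lemma gp_left (g w u v : H) : gp A (g * w) (g * u) (g * v) = gp A w u v := by
  unfold gp
  rw [wd_left, wd_left, wd_left]

/-- Key algebraic identity: `d(a,x) = (x|y)ₐ + (x|z)ₐ − (y|z)ₐ + (y|z)ₓ`. -/
lemma gp_ident (a x y z : H) :
    (wd A a x : ℝ) = gp A a x y + gp A a x z - gp A a y z + gp A x y z := by
  unfold gp
  ring

end Basic


section Geo

variable {A : Set H}


lemma exists_geodesic (hgen : Subgroup.closure A = ⊤) (g h : H) :
    ∃ γ : ℕ → H, IsDiscreteGeodesic A (wd A g h) γ g h := by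
  obtain ⟨l, hl, hmem, hprod⟩ := wd_spec hgen g h
  set n := wd A g h with hn
  refine ⟨fun i => g * (l.take i).prod, by simp, ?_, ?_⟩
  · simp only
    rw [List.take_of_length_le (le_of_eq hl), hprod]
    group
  -- the distance between γ i and γ j is exactly |i - j|
  have key : ∀ i j, i ≤ j → j ≤ n → wd A (g * (l.take i).prod) (g * (l.take j).prod) = j - i := by
    intro i j hij hj
    have hle : wd A (g * (l.take i).prod) (g * (l.take j).prod) ≤ j - i := by
      rw [wd_left]
      refine wd_le ⟨(l.drop i).take (j - i), ?_, ?_, ?_⟩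
      · rw [List.length_take, List.length_drop, hl]
        omega
      · intro a ha
        exact hmem a (List.mem_of_mem_drop (List.mem_of_mem_take ha))
      · have : l.take j = l.take i ++ (l.drop i).take (j - i) := by
          rw [← List.take_add]
          congr 1
          omega
        rw [this, List.prod_append]
        group
    -- segment bounds
    have hseg : ∀ a b, a ≤ b → b ≤ n → wd A (g * (l.take a).prod) (g * (l.take b).prod) ≤ b - a := by
      intro a b hab hb
      rw [wd_left]
      refine wd_le ⟨(l.drop a).take (b - a), ?_, ?_, ?_⟩
      · rw [List.length_take, List.length_drop, hl]; omega
      · intro c hc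
        exact hmem c (List.mem_of_mem_drop (List.mem_of_mem_take hc))
      · have : l.take b = l.take a ++ (l.drop a).take (b - a) := by
          rw [← List.take_add]; congr 1; omega
        rw [this, List.prod_append]; group
    have h0i : wd A g (g * (l.take i).prod) ≤ i := by
      simpa using hseg 0 i (Nat.zero_le i) (le_trans hij hj)
    have hjn : wd A (g * (l.take j).prod) h ≤ n - j := by
      have := hseg j n hj (le_refl n)
      rw [List.take_of_length_le (le_of_eq hl), hprod] at this
      have hne : g * (g⁻¹ * h) = h := by group
      rwa [hne] at this
    have hge : j - i ≤ wd A (g * (l.take i).prod) (g * (l.take j).prod) := by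
      by_contra hcon
      push_neg at hcon
      have htri : n ≤ wd A g (g * (l.take i).prod)
          + wd A (g * (l.take i).prod) (g * (l.take j).prod)
          + wd A (g * (l.take j).prod) h := by
        calc n = wd A g h := hn
        _ ≤ wd A g (g * (l.take j).prod) + wd A (g * (l.take j).prod) h :=
            wd_triangle hgen _ _ _
        _ ≤ (wd A g (g * (l.take i).prod) + wd A (g * (l.take i).prod) (g * (l.take j).prod))
            + wd A (g * (l.take j).prod) h := by
            have := wd_triangle hgen g (g * (l.take i).prod) (g * (l.take j).prod)
            omega
      omega
    omega
  intro i hi j hj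
  rcases le_total i j with hij | hij
  · have := key i j hij hj
    rw [this]
    have : ((j - i : ℕ) : ℤ) = (j : ℤ) - i := by omega
    rw [this, abs_sub_comm, abs_of_nonneg (by omega : (0:ℤ) ≤ (j:ℤ) - i)]
  · have := key j i hij hi
    rw [wd_symm (A := A), this]
    have : ((i - j : ℕ) : ℤ) = (i : ℤ) - j := by omega
    rw [this, abs_of_nonneg (by omega : (0:ℤ) ≤ (i:ℤ) - j)]

lemma geo_wd {n : ℕ} {γ : ℕ → H} {x y : H} (hγ : IsDiscreteGeodesic A n γ x y)
    {i j : ℕ} (hi : i ≤ n) (hj : j ≤ n) (hij : i ≤ j) :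
    (wd A (γ i) (γ j) : ℝ) = (j : ℝ) - i := by
  have h := hγ.2.2 i hi j hj
  have : (wd A (γ i) (γ j) : ℤ) = (j : ℤ) - i := by
    rw [h, abs_sub_comm, abs_of_nonneg (by omega : (0:ℤ) ≤ (j:ℤ) - i)]
  exact_mod_cast this

lemma geo_len {n : ℕ} {γ : ℕ → H} {x y : H} (hγ : IsDiscreteGeodesic A n γ x y) :
    (wd A x y : ℝ) = n := by
  have := geo_wd hγ (Nat.zero_le n) (le_refl n) (Nat.zero_le n)
  rw [hγ.1, hγ.2.1] at this
  simpa using this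

end Geo

section Lip

variable {A : Set H}

lemma exists_lipschitz (hA : A.Finite) (hgen : Subgroup.closure A = ⊤) (φ : H →* H) :
    ∃ L : ℕ, ∀ g h : H, wd A (φ g) (φ h) ≤ L * wd A g h := by
  classical
  set S := hA.toFinset
  set L := S.sup (fun a => max (wd A 1 (φ a)) (wd A 1 (φ a⁻¹))) with hL
  have hgenL : ∀ a : H, (a ∈ A ∨ a⁻¹ ∈ A) → wd A 1 (φ a) ≤ L := by
    rintro a (ha | ha)
    · have : a ∈ S := hA.mem_toFinset.2 ha
      exact le_trans (le_max_left _ _) (Finset.le_sup (f := fun a => max (wd A 1 (φ a)) (wd A 1 (φ a⁻¹))) this)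
    · have : a⁻¹ ∈ S := hA.mem_toFinset.2 ha
      have h2 := Finset.le_sup (f := fun a => max (wd A 1 (φ a)) (wd A 1 (φ a⁻¹))) this
      have : wd A 1 (φ (a⁻¹)⁻¹) ≤ L := le_trans (le_max_right _ _) h2
      simpa using this
  -- words map to words of length ≤ L * length
  have key : ∀ l : List H, (∀ x ∈ l, x ∈ A ∨ x⁻¹ ∈ A) → wd A 1 (φ l.prod) ≤ L * l.length := by
    intro l
    induction l with
    | nil => intro _; simp [wd_self]
    | cons a l ih =>
        intro hmem
        have h1 : wd A 1 (φ (a * l.prod)) ≤ wd A 1 (φ a) + wd A (φ a) (φ a * φ l.prod) := by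
          have := wd_triangle hgen (1 : H) (φ a) (φ a * φ l.prod)
          simpa [map_mul] using this
        have h2 : wd A (φ a) (φ a * φ l.prod) = wd A 1 (φ l.prod) := by
          have := wd_left (A := A) (φ a) 1 (φ l.prod)
          simpa using this
        have h3 := ih (fun x hx => hmem x (List.mem_cons_of_mem a hx))
        have h4 := hgenL a (hmem a List.mem_cons_self)
        calc wd A 1 (φ (a * l.prod)) ≤ wd A 1 (φ a) + wd A 1 (φ l.prod) := by omega
        _ ≤ L + L * l.length := by omega
        _ = L * (a :: l).length := by simp [Nat.mul_add, Nat.mul_succ]; ring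
  refine ⟨L, fun g h => ?_⟩
  obtain ⟨l, hl, hmem, hprod⟩ := wd_spec hgen g h
  have := key l hmem
  rw [hprod, hl] at this
  calc wd A (φ g) (φ h) = wd A 1 (φ (g⁻¹ * h)) := by
        rw [wd_one]
        congr 1
        simp [map_mul]
  _ ≤ L * wd A g h := this

end Lip




section Core

variable {A : Set H}

lemma wd_tri_real (hgen : Subgroup.closure A = ⊤) (g h k : H) :
    (wd A g k : ℝ) ≤ (wd A g h : ℝ) + (wd A h k : ℝ) := by
  exact_mod_cast wd_triangle hgen g h k

lemma wd_symm_real (g h : H) : (wd A g h : ℝ) = (wd A h g : ℝ) := by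
  exact_mod_cast wd_symm (A := A) g h

/-- If `m` is within `K` of every geodesic from `x` to `y`, then `(x|y)_m ≤ K`. -/
lemma gp_center_le (hgen : Subgroup.closure A = ⊤) {K : ℝ} {x y m : H}
    (h : ∀ n : ℕ, ∀ γ : ℕ → H, IsDiscreteGeodesic A n γ x y →
      ∃ i, i ≤ n ∧ (wd A m (γ i) : ℝ) ≤ K) :
    gp A m x y ≤ K := by
  obtain ⟨γ, hγ⟩ := exists_geodesic hgen x y
  set n := wd A x y with hn
  obtain ⟨i, hi, hd⟩ := h n γ hγ
  have h1 : (wd A x (γ i) : ℝ) = (i : ℝ) := by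
    have := geo_wd hγ (Nat.zero_le n) hi (Nat.zero_le i)
    rw [hγ.1] at this; simpa using this
  have h2 : (wd A (γ i) y : ℝ) = (n : ℝ) - i := by
    have := geo_wd hγ hi (le_refl n) hi
    rwa [hγ.2.1] at this
  have t1 : (wd A m x : ℝ) ≤ (wd A m (γ i) : ℝ) + (wd A (γ i) x : ℝ) := wd_tri_real hgen _ _ _
  have t2 : (wd A m y : ℝ) ≤ (wd A m (γ i) : ℝ) + (wd A (γ i) y : ℝ) := wd_tri_real hgen _ _ _
  have hs : (wd A (γ i) x : ℝ) = (i : ℝ) := by rw [wd_symm_real]; exact h1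
  unfold gp
  rw [← hn]
  linarith

/-- A point is close to any geodesic `[x,y]`, within its Gromov product plus `2δ + 1`. -/
lemma close_to_geodesic (hgen : Subgroup.closure A = ⊤) {δ : ℝ} (hδ0 : 0 ≤ δ)
    (hrips : ∀ x y z : H, ∀ n₁ n₂ n₃ : ℕ, ∀ α β γ : ℕ → H,
      IsDiscreteGeodesic A n₁ α x y → IsDiscreteGeodesic A n₂ β y z →
      IsDiscreteGeodesic A n₃ γ z x → ∀ i, i ≤ n₁ →
        ∃ j, (j ≤ n₂ ∧ (wd A (α i) (β j) : ℝ) ≤ δ) ∨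
             (j ≤ n₃ ∧ (wd A (α i) (γ j) : ℝ) ≤ δ))
    (a x y : H) {n : ℕ} {γ : ℕ → H} (hγ : IsDiscreteGeodesic A n γ x y) :
    ∃ i, i ≤ n ∧ (wd A a (γ i) : ℝ) ≤ gp A a x y + 2 * δ + 1 := by
  classical
  obtain ⟨β, hβ⟩ := exists_geodesic hgen y a
  obtain ⟨γ', hγ'⟩ := exists_geodesic hgen a x
  set n₂ := wd A y a with hn₂
  set n₃ := wd A a x with hn₃
  have hrip := hrips x y a n n₂ n₃ γ β γ' hγ hβ hγ'
  -- basic distances as reals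
  have hdxy : (wd A x y : ℝ) = (n : ℝ) := geo_len hγ
  have hdya : (wd A y a : ℝ) = (n₂ : ℝ) := by exact_mod_cast rfl
  have hdax : (wd A a x : ℝ) = (n₃ : ℝ) := by exact_mod_cast rfl
  set P : ℕ → Prop := fun i => ∃ j, j ≤ n₃ ∧ (wd A (γ i) (γ' j) : ℝ) ≤ δ with hP
  have hP0 : P 0 := by
    refine ⟨n₃, le_refl _, ?_⟩
    rw [hγ.1, ← hγ'.2.1, wd_symm_real]
    have := geo_wd hγ' (le_refl n₃) (le_refl n₃) (le_refl n₃)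
    rw [this]
    simpa using hδ0
  set i₀ := Nat.findGreatest P n with hi₀def
  have hi₀n : i₀ ≤ n := Nat.findGreatest_le n
  have hPi₀ : P i₀ := Nat.findGreatest_spec (Nat.zero_le n) hP0
  obtain ⟨k, hkn, hk⟩ := hPi₀
  -- distances along γ'
  have hγ'a : (wd A a (γ' k) : ℝ) = (k : ℝ) := by
    have := geo_wd hγ' (Nat.zero_le n₃) hkn (Nat.zero_le k)
    rw [hγ'.1] at this; simpa using this
  have hγ'x : (wd A (γ' k) x : ℝ) = (n₃ : ℝ) - k := by
    have := geo_wd hγ' hkn (le_refl n₃) hkn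
    rwa [hγ'.2.1] at this
  -- positional distances along γ
  have hxi₀ : (wd A x (γ i₀) : ℝ) = (i₀ : ℝ) := by
    have := geo_wd hγ (Nat.zero_le n) hi₀n (Nat.zero_le i₀)
    rw [hγ.1] at this; simpa using this
  -- first group of estimates (valid in both cases):
  have est1 : (wd A a (γ i₀) : ℝ) ≤ (k : ℝ) + δ := by
    have := wd_tri_real hgen a (γ' k) (γ i₀)
    rw [hγ'a] at this
    rw [wd_symm_real (γ i₀) (γ' k)] at hk
    linarith
  have est2 : (i₀ : ℝ) ≤ (n₃ : ℝ) - k + δ := by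
    have := wd_tri_real hgen x (γ' k) (γ i₀)
    rw [wd_symm_real x (γ' k), hγ'x, hxi₀] at this
    rw [wd_symm_real (γ i₀) (γ' k)] at hk
    linarith
  by_cases hcase : i₀ = n
  · -- the far endpoint y is close to the side [a,x]
    refine ⟨n, le_refl n, ?_⟩
    have e1 : (wd A a (γ n) : ℝ) ≤ (k : ℝ) + δ := by rw [← hcase]; exact est1
    have e2 : (n : ℝ) ≤ (n₃ : ℝ) - k + δ := by
      have := est2; rw [hcase] at this; exact_mod_cast this
    rw [hγ.2.1] at e1
    rw [hγ.2.1]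
    unfold gp
    have s1 : (wd A a y : ℝ) = (wd A y a : ℝ) := wd_symm_real _ _
    have s2 : (wd A a x : ℝ) = (n₃ : ℝ) := by rw [hn₃]
    have s3 : (wd A x y : ℝ) = (n : ℝ) := geo_len hγ
    linarith
  · refine ⟨i₀, hi₀n, ?_⟩
    have hlt : i₀ < n := lt_of_le_of_ne hi₀n hcase
    have hnP : ¬ P (i₀ + 1) := Nat.findGreatest_is_greatest (by rw [← hi₀def]; omega) (by omega)
    obtain ⟨j, hj⟩ := hrip (i₀ + 1) (by omega)
    rcases hj with ⟨hjn, hjd⟩ | ⟨hjn, hjd⟩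
    swap
    · exact absurd ⟨j, hjn, hjd⟩ hnP
    -- distances along β
    have hβy : (wd A y (β j) : ℝ) = (j : ℝ) := by
      have := geo_wd hβ (Nat.zero_le n₂) hjn (Nat.zero_le j)
      rw [hβ.1] at this; simpa using this
    have hβa : (wd A (β j) a : ℝ) = (n₂ : ℝ) - j := by
      have := geo_wd hβ hjn (le_refl n₂) hjn
      rwa [hβ.2.1] at this
    have hyi1 : (wd A (γ (i₀ + 1)) y : ℝ) = (n : ℝ) - ((i₀ : ℝ) + 1) := by
      have := geo_wd hγ (by omega : i₀ + 1 ≤ n) (le_refl n) (by omega)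
      rw [hγ.2.1] at this
      rw [this]; push_cast; ring
    have hstep : (wd A (γ i₀) (γ (i₀ + 1)) : ℝ) = 1 := by
      have := geo_wd hγ hi₀n (by omega : i₀ + 1 ≤ n) (by omega)
      rw [this]; push_cast; ring
    have tri1 : (wd A a (γ (i₀ + 1)) : ℝ) ≤ ((n₂ : ℝ) - j) + δ := by
      have t := wd_tri_real hgen a (β j) (γ (i₀ + 1))
      have s : (wd A a (β j) : ℝ) = (n₂ : ℝ) - j := by rw [wd_symm_real]; exact hβa
      have s2 : (wd A (β j) (γ (i₀ + 1)) : ℝ) ≤ δ := by rw [wd_symm_real]; exact hjd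
      linarith
    have tri2 : (n : ℝ) - ((i₀ : ℝ) + 1) ≤ δ + j := by
      have t := wd_tri_real hgen (γ (i₀ + 1)) (β j) y
      have s : (wd A (β j) y : ℝ) = (j : ℝ) := by rw [wd_symm_real]; exact hβy
      linarith
    have tri3 : (wd A a (γ i₀) : ℝ) ≤ (wd A a (γ (i₀ + 1)) : ℝ) + 1 := by
      have t := wd_tri_real hgen a (γ (i₀ + 1)) (γ i₀)
      have s : (wd A (γ (i₀ + 1)) (γ i₀) : ℝ) = 1 := by rw [wd_symm_real]; exact hstep
      linarith
    unfold gp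
    have s1 : (wd A a y : ℝ) = (n₂ : ℝ) := by rw [wd_symm_real, hn₂]
    have s2 : (wd A a x : ℝ) = (n₃ : ℝ) := by rw [hn₃]
    have s3 : (wd A x y : ℝ) = (n : ℝ) := geo_len hγ
    linarith

/-- Two quasi-centers of the same triple are uniformly close. -/
lemma centers_close (hgen : Subgroup.closure A = ⊤) {δ : ℝ} (hδ0 : 0 ≤ δ)
    (hrips : ∀ x y z : H, ∀ n₁ n₂ n₃ : ℕ, ∀ α β γ : ℕ → H,
      IsDiscreteGeodesic A n₁ α x y → IsDiscreteGeodesic A n₂ β y z →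
      IsDiscreteGeodesic A n₃ γ z x → ∀ i, i ≤ n₁ →
        ∃ j, (j ≤ n₂ ∧ (wd A (α i) (β j) : ℝ) ≤ δ) ∨
             (j ≤ n₃ ∧ (wd A (α i) (γ j) : ℝ) ≤ δ))
    {q K : ℝ} (hq0 : 0 ≤ q) (hK0 : 0 ≤ K) (X Y Z a b : H)
    (ha1 : gp A a X Y ≤ q) (ha2 : gp A a X Z ≤ q) (ha3 : gp A a Y Z ≤ q)
    (hb : IsKCenter A K X Y Z b) :
    (wd A a b : ℝ) ≤ 4 * q + 4 * K + 4 * δ + 2 := by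
  obtain ⟨γ, hγ⟩ := exists_geodesic hgen X Y
  set n := wd A X Y with hn
  obtain ⟨i, hi, hai⟩ := close_to_geodesic hgen hδ0 hrips a X Y hγ
  obtain ⟨j, hj, hbj⟩ := hb.1 n γ hγ
  -- positions along the geodesic
  have hXi : (wd A X (γ i) : ℝ) = (i : ℝ) := by
    have := geo_wd hγ (Nat.zero_le n) hi (Nat.zero_le i)
    rw [hγ.1] at this; simpa using this
  have hXj : (wd A X (γ j) : ℝ) = (j : ℝ) := by
    have := geo_wd hγ (Nat.zero_le n) hj (Nat.zero_le j)
    rw [hγ.1] at this; simpa using this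
  have hRa : (wd A a (γ i) : ℝ) ≤ q + 2 * δ + 1 := by linarith
  -- comparing positions with distances from X
  have e1 : (i : ℝ) ≤ (wd A a X : ℝ) + (wd A a (γ i) : ℝ) := by
    have t := wd_tri_real hgen X a (γ i)
    rw [hXi, wd_symm_real X a] at t
    exact t
  have e2 : (wd A a X : ℝ) ≤ (i : ℝ) + (wd A a (γ i) : ℝ) := by
    have t := wd_tri_real hgen a (γ i) X
    have s : (wd A (γ i) X : ℝ) = (i : ℝ) := by rw [wd_symm_real]; exact hXi
    linarith
  have f1 : (j : ℝ) ≤ (wd A b X : ℝ) + (wd A b (γ j) : ℝ) := by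
    have t := wd_tri_real hgen X b (γ j)
    rw [hXj, wd_symm_real X b] at t
    exact t
  have f2 : (wd A b X : ℝ) ≤ (j : ℝ) + (wd A b (γ j) : ℝ) := by
    have t := wd_tri_real hgen b (γ j) X
    have s : (wd A (γ j) X : ℝ) = (j : ℝ) := by rw [wd_symm_real]; exact hXj
    linarith
  -- Gromov product bounds at b
  have hb1 : gp A b X Y ≤ K := gp_center_le hgen hb.1
  have hb2 : gp A b Y Z ≤ K := gp_center_le hgen hb.2.1
  have hb3 : gp A b X Z ≤ K := by
    rw [gp_symm]; exact gp_center_le hgen hb.2.2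
  -- nonnegativity
  have n1 := gp_nonneg hgen a X Y
  have n2 := gp_nonneg hgen a X Z
  have n3 := gp_nonneg hgen a Y Z
  have n4 := gp_nonneg hgen b X Y
  have n5 := gp_nonneg hgen b X Z
  have n6 := gp_nonneg hgen b Y Z
  -- distance-from-vertex identities
  have ida := gp_ident (A := A) a X Y Z
  have idb := gp_ident (A := A) b X Y Z
  -- final assembly
  have tri : (wd A a b : ℝ) ≤ (wd A a (γ i) : ℝ) + (wd A (γ i) (γ j) : ℝ)
      + (wd A b (γ j) : ℝ) := by
    have t1 := wd_tri_real hgen a (γ i) b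
    have t2 := wd_tri_real hgen (γ i) (γ j) b
    have s : (wd A (γ j) b : ℝ) = (wd A b (γ j) : ℝ) := wd_symm_real _ _
    linarith
  rcases le_total i j with hij | hij
  · have dij : (wd A (γ i) (γ j) : ℝ) = (j : ℝ) - i := geo_wd hγ hi hj hij
    linarith
  · have dij : (wd A (γ i) (γ j) : ℝ) = (i : ℝ) - j := by
      rw [wd_symm_real]; exact geo_wd hγ hj hi hij
    linarith

end Core

lemma gp_conj {A : Set H} (m u v : H) : gp A m u v = gp A 1 (m⁻¹ * u) (m⁻¹ * v) := by
  have := gp_left (A := A) m 1 (m⁻¹ * u) (m⁻¹ * v)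
  simp only [mul_one, mul_inv_cancel_left] at this
  exact this


/-- The BRP holds for `φ` if and only if `φ` is coarse-median preserving, where the
coarse median of a hyperbolic group is given by `K`-centers of triples. -/
theorem brp_iff_coarseMedianPreserving
    (A : Set H) (hA : A.Finite) (hgen : Subgroup.closure A = ⊤)
    (hhyp : IsHyperbolic A) (K : ℝ) (hK : 0 ≤ K)
    (hcenter : ∀ x y z : H, ∃ m : H, IsKCenter A K x y z m)
    (φ : H →* H) :
    BRP A φ ↔
      ∃ C : ℝ, 0 ≤ C ∧ ∀ x y z m m' : H,
        IsKCenter A K x y z m → IsKCenter A K (φ x) (φ y) (φ z) m' →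
        (wd A (φ m) m' : ℝ) ≤ C := by
  obtain ⟨δ, hδ0, hrips⟩ := hhyp
  constructor
  · -- BRP implies coarse-median preserving
    intro hbrp
    obtain ⟨q, hq0, hq⟩ := hbrp K hK
    refine ⟨4 * q + 4 * K + 4 * δ + 2, by linarith, ?_⟩
    intro x y z m m' hm hm'
    have key : ∀ u v : H, gp A m u v ≤ K → gp A (φ m) (φ u) (φ v) ≤ q := by
      intro u v h
      rw [gp_conj] at h
      have h2 := hq _ _ h
      calc gp A (φ m) (φ u) (φ v)
          = gp A 1 ((φ m)⁻¹ * φ u) ((φ m)⁻¹ * φ v) := gp_conj _ _ _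
        _ = gp A 1 (φ (m⁻¹ * u)) (φ (m⁻¹ * v)) := by simp only [map_mul, map_inv]
        _ ≤ q := h2
    have c1 : gp A m x y ≤ K := gp_center_le hgen hm.1
    have c2 : gp A m y z ≤ K := gp_center_le hgen hm.2.1
    have c3 : gp A m x z ≤ K := by rw [gp_symm]; exact gp_center_le hgen hm.2.2
    exact centers_close hgen hδ0 hrips hq0 hK (φ x) (φ y) (φ z) (φ m) m'
      (key x y c1) (key x z c3) (key y z c2) hm'
  · -- coarse-median preserving implies BRP
    rintro ⟨C, hC0, hcmp⟩
    obtain ⟨L, hL⟩ := exists_lipschitz hA hgen φ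
    intro p hp
    have hL0 : (0 : ℝ) ≤ (L : ℝ) := Nat.cast_nonneg L
    refine ⟨(L : ℝ) * (p + 2 * K) + C + K, by nlinarith, ?_⟩
    intro u v huv
    obtain ⟨m, hm⟩ := hcenter 1 u v
    obtain ⟨m', hm'⟩ := hcenter 1 (φ u) (φ v)
    have hm'' : IsKCenter A K (φ 1) (φ u) (φ v) m' := by rwa [map_one]
    have hd := hcmp 1 u v m m' hm hm''
    -- the center m is within p + 2K of the identity
    have idm := gp_ident (A := A) m 1 u v
    have g1 : gp A m 1 u ≤ K := gp_center_le hgen hm.1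
    have g2 : gp A m 1 v ≤ K := by rw [gp_symm]; exact gp_center_le hgen hm.2.2
    have g0 := gp_nonneg hgen m u v
    have hdm : (wd A m 1 : ℝ) ≤ p + 2 * K := by linarith
    -- the image of m is within L(p+2K) of the identity
    have hlip : (wd A (φ 1) (φ m) : ℝ) ≤ (L : ℝ) * (wd A 1 m : ℝ) := by
      exact_mod_cast hL 1 m
    rw [map_one] at hlip
    have hsym : (wd A 1 m : ℝ) = (wd A m 1 : ℝ) := wd_symm_real _ _
    rw [hsym] at hlip
    have hmul : (L : ℝ) * (wd A m 1 : ℝ) ≤ (L : ℝ) * (p + 2 * K) :=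
      mul_le_mul_of_nonneg_left hdm hL0
    have tri := wd_tri_real hgen 1 (φ m) m'
    -- conclude using the identity at m'
    have idm' := gp_ident (A := A) m' 1 (φ u) (φ v)
    have g1' := gp_nonneg hgen m' 1 (φ u)
    have g2' := gp_nonneg hgen m' 1 (φ v)
    have g3' : gp A m' (φ u) (φ v) ≤ K := gp_center_le hgen hm'.2.1
    have hsym' : (wd A m' 1 : ℝ) = (wd A 1 m' : ℝ) := wd_symm_real _ _
    linarith


end Paper
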